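/- Let H₁ = [[1, -A⁴],[0, -A⁴]] and H₂ = [[-A⁴, 0],[-1, 1]] be matrices over ℤ[A, A⁻¹]. Then H₁H₂H₁ = H₂H₁H₂. -/
import Mathlib


open LaurentPolynomial

theorem stmt_12 :
    let a : LaurentPolynomial ℤ := T 1
    let H₁ : Matrix (Fin 2) (Fin 2) (LaurentPolynomial ℤ) :=
      !![1, -(a ^ 4); 0, -(a ^ 4)]
    let H₂ : Matrix (Fin 2) (Fin 2) (LaurentPolynomial ℤ) :=
      !![-(a ^ 4), 0; -1, 1]
    H₁ * H₂ * H₁ = H₂ * H₁ * H₂ := by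
  intro a H₁ H₂
  show H₁ * H₂ * H₁ = H₂ * H₁ * H₂
  simp only [H₁, H₂, Matrix.mul_fin_two]
  ring_nf
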